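/- Let n, N be natural numbers with 1 ≤ n ≤ N, let (Ω, μ) be a probability space, and let X_1, ..., X_n : Ω → ℕ be mutually independent random variables such that for each i ∈ {1,...,n}, X_i has the geometric distribution on {1,2,...} with success probability 1/(N-i+1), i.e. μ(X_i = 0) = 0 and μ(X_i = k) = ((N-i)/(N-i+1))^{k-1} · (1/(N-i+1)) for all k ≥ 1. Then the total number of trials T = X_1 + ... + X_n satisfies Var(T) = n(3N² - 3Nn + n² - 1)/3. -/

import Mathlib

open MeasureTheory ProbabilityTheory
open scoped ENNReal

lemma geom_hasSum1 {a : ℝ} (ha : 1 ≤ a) :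
    HasSum (fun k : ℕ => ((k : ℝ) + 1) * ((a - 1) / a) ^ k * (1 / a)) a := by
  have ha0 : 0 < a := lt_of_lt_of_le one_pos ha
  set r : ℝ := (a - 1) / a with hr_def
  have hr0 : 0 ≤ r := div_nonneg (by linarith) ha0.le
  have hr : ‖r‖ < 1 := by
    rw [Real.norm_eq_abs, abs_of_nonneg hr0, hr_def, div_lt_one ha0]; linarith
  have h1r : 1 - r = 1 / a := by rw [hr_def]; field_simp; ring
  have h1 := (hasSum_choose_mul_geometric_of_norm_lt_one 1 hr).mul_right (1 / a)
  convert h1 using 1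
  · rfl
  · funext k; simp [Nat.choose_one_right]
  · rw [h1r]; norm_num; field_simp

lemma geom_hasSum2 {a : ℝ} (ha : 1 ≤ a) :
    HasSum (fun k : ℕ => ((k : ℝ) + 1) ^ 2 * ((a - 1) / a) ^ k * (1 / a))
      (2 * a ^ 2 - a) := by
  have ha0 : 0 < a := lt_of_lt_of_le one_pos ha
  set r : ℝ := (a - 1) / a with hr_def
  have hr0 : 0 ≤ r := div_nonneg (by linarith) ha0.le
  have hr : ‖r‖ < 1 := by
    rw [Real.norm_eq_abs, abs_of_nonneg hr0, hr_def, div_lt_one ha0]; linarith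
  have h1r : 1 - r = 1 / a := by rw [hr_def]; field_simp; ring
  have h3 := (((hasSum_choose_mul_geometric_of_norm_lt_one 2 hr).mul_left 2).sub
      (hasSum_choose_mul_geometric_of_norm_lt_one 1 hr)).mul_right (1 / a)
  convert h3 using 1
  · rfl
  · funext k
    have hc2 : (((k + 2).choose 2 : ℕ) : ℝ) = (k + 2) * (k + 1) / 2 := by
      rw [Nat.cast_choose_two]; push_cast; ring
    rw [Nat.choose_one_right, hc2]; push_cast; ring
  · rw [h1r]; simp only [one_div, inv_pow, inv_inv]; field_simp; ring

lemma geom_moments {Ω : Type*} [MeasurableSpace Ω] (μ : Measure Ω) [IsProbabilityMeasure μ]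
    (X : Ω → ℕ) (hX : Measurable X) (a : ℝ) (ha : 1 ≤ a)
    (h0 : μ {ω | X ω = 0} = 0)
    (hg : ∀ k : ℕ, 1 ≤ k →
      μ {ω | X ω = k} = ENNReal.ofReal (((a - 1) / a) ^ (k - 1) * (1 / a))) :
    MemLp (fun ω => (X ω : ℝ)) 2 μ ∧
      variance (fun ω => (X ω : ℝ)) μ = a ^ 2 - a := by
  have ha0 : 0 < a := lt_of_lt_of_le one_pos ha
  set r : ℝ := (a - 1) / a with hr_def
  have hr0 : 0 ≤ r := div_nonneg (by linarith) ha0.le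
  have hmap : ∀ k : ℕ, (μ.map X) {k} = μ {ω | X ω = k} := by
    intro k
    rw [Measure.map_apply hX (measurableSet_singleton k)]
    rfl
  have hterm : ∀ k : ℕ, (μ.map X) {k + 1} = ENNReal.ofReal (r ^ k * (1 / a)) := by
    intro k
    rw [hmap, hg (k + 1) (by omega)]
    simp
  have key : ∀ (m : ℕ) (S : ℝ),
      HasSum (fun k : ℕ => ((k : ℝ) + 1) ^ m * r ^ k * (1 / a)) S →
      ∫⁻ ω, ((X ω : ℝ≥0∞)) ^ m ∂μ = ENNReal.ofReal S := by
    intro m S hS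
    have hmeas : Measurable fun k : ℕ => ((k : ℝ≥0∞)) ^ m := measurable_from_top
    rw [← lintegral_map hmeas hX, lintegral_countable']
    rw [tsum_eq_zero_add' ENNReal.summable]
    have hz : ((0 : ℕ) : ℝ≥0∞) ^ m * (μ.map X) {0} = 0 := by
      rw [hmap, h0, mul_zero]
    rw [hz, zero_add]
    have hptw : ∀ k : ℕ, (((k + 1 : ℕ) : ℝ≥0∞)) ^ m * (μ.map X) {k + 1}
        = ENNReal.ofReal (((k : ℝ) + 1) ^ m * r ^ k * (1 / a)) := by
      intro k
      rw [hterm k, ← ENNReal.ofReal_natCast (k + 1), ← ENNReal.ofReal_pow (by positivity),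
        ← ENNReal.ofReal_mul (by positivity)]
      push_cast
      ring_nf
    simp_rw [hptw]
    rw [← ENNReal.ofReal_tsum_of_nonneg (fun k => by positivity) hS.summable, hS.tsum_eq]
  have hmeasY : Measurable fun ω => (X ω : ℝ) :=
    (measurable_from_top (f := (Nat.cast : ℕ → ℝ))).comp hX
  have L1 : ∫⁻ ω, ((X ω : ℝ≥0∞)) ∂μ = ENNReal.ofReal a := by
    have := key 1 a (by simpa using geom_hasSum1 ha)
    simpa using this
  have L2 := key 2 (2 * a ^ 2 - a) (geom_hasSum2 ha)
  have int_sq : Integrable (fun ω => (X ω : ℝ) ^ 2) μ := by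
    refine ⟨(hmeasY.pow_const 2).aestronglyMeasurable, ?_⟩
    rw [hasFiniteIntegral_iff_ofReal (ae_of_all _ fun ω => by positivity)]
    have hofr : ∀ ω, ENNReal.ofReal ((X ω : ℝ) ^ 2) = ((X ω : ℝ≥0∞)) ^ 2 := fun ω => by
      rw [ENNReal.ofReal_pow (by positivity), ENNReal.ofReal_natCast]
    simp_rw [hofr]
    rw [L2]
    exact ENNReal.ofReal_lt_top
  have hmem : MemLp (fun ω => (X ω : ℝ)) 2 μ :=
    (memLp_two_iff_integrable_sq hmeasY.aestronglyMeasurable).2 int_sq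
  have hE1 : ∫ ω, (X ω : ℝ) ∂μ = a := by
    rw [integral_eq_lintegral_of_nonneg_ae (ae_of_all _ fun ω => by positivity)
      hmeasY.aestronglyMeasurable]
    simp_rw [ENNReal.ofReal_natCast]
    rw [L1, ENNReal.toReal_ofReal (by linarith)]
  have hE2 : ∫ ω, (X ω : ℝ) ^ 2 ∂μ = 2 * a ^ 2 - a := by
    rw [integral_eq_lintegral_of_nonneg_ae (ae_of_all _ fun ω => by positivity)
      (hmeasY.pow_const 2).aestronglyMeasurable]
    have hofr : ∀ ω, ENNReal.ofReal ((X ω : ℝ) ^ 2) = ((X ω : ℝ≥0∞)) ^ 2 := fun ω => by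
      rw [ENNReal.ofReal_pow (by positivity), ENNReal.ofReal_natCast]
    simp_rw [hofr]
    rw [L2, ENNReal.toReal_ofReal (by nlinarith)]
  refine ⟨hmem, ?_⟩
  rw [variance_eq_sub hmem]
  have hpow : (fun ω => (X ω : ℝ)) ^ 2 = fun ω => (X ω : ℝ) ^ 2 := rfl
  rw [hpow, hE2, hE1]
  ring

lemma sum_range_poly (x : ℝ) (n : ℕ) :
    ∑ i ∈ Finset.range n, ((x - i) ^ 2 - (x - i))
      = n * (3 * x ^ 2 - 3 * x * n + n ^ 2 - 1) / 3 := by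
  induction n with
  | zero => simp
  | succ m ih =>
    rw [Finset.sum_range_succ, ih]
    push_cast
    ring

/-- Totally random strategy: variance of the total number of trials to open `n` locks with
`N ≥ n` keys, assuming mutual independence.  The variable `X i` (for `i : Fin n`, corresponding
to the `(i+1)`-th lock) is geometric on `{1,2,...}` with success probability `1/(N-i)`. -/
theorem totally_random_variance
    (n N : ℕ) (hn : 1 ≤ n) (hnN : n ≤ N)
    {Ω : Type*} [MeasurableSpace Ω] (μ : Measure Ω) [IsProbabilityMeasure μ]
    (X : Fin n → Ω → ℕ) (hX : ∀ i, Measurable (X i))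
    (hindep : iIndepFun X μ)
    (h0 : ∀ i, μ {ω | X i ω = 0} = 0)
    (hgeom : ∀ i : Fin n, ∀ k : ℕ, 1 ≤ k →
      μ {ω | X i ω = k}
        = ENNReal.ofReal
            ((((N : ℝ) - (i : ℕ) - 1) / ((N : ℝ) - (i : ℕ))) ^ (k - 1)
              * (1 / ((N : ℝ) - (i : ℕ))))) :
    variance (fun ω => ((∑ i, X i ω : ℕ) : ℝ)) μ
      = (n : ℝ) * (3 * (N : ℝ) ^ 2 - 3 * (N : ℝ) * (n : ℝ) + (n : ℝ) ^ 2 - 1) / 3 := by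
  set Y : Fin n → Ω → ℝ := fun i ω => (X i ω : ℝ) with hY
  have ha : ∀ i : Fin n, 1 ≤ (N : ℝ) - (i : ℕ) := by
    intro i
    have : (i : ℕ) + 1 ≤ N := le_trans i.2 hnN
    have := Nat.cast_le (α := ℝ).2 this
    push_cast at this
    linarith
  have hmom := fun i : Fin n =>
    geom_moments μ (X i) (hX i) ((N : ℝ) - (i : ℕ)) (ha i) (h0 i) (hgeom i)
  have hfun : (fun ω => ((∑ i, X i ω : ℕ) : ℝ)) = ∑ i, Y i := by
    funext ω
    push_cast
    simp [hY, Finset.sum_apply]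
  rw [hfun]
  rw [IndepFun.variance_sum (fun i _ => (hmom i).1)
    (fun i _ j _ hij => (hindep.indepFun hij).comp
      (measurable_from_top (f := (Nat.cast : ℕ → ℝ)))
      (measurable_from_top (f := (Nat.cast : ℕ → ℝ))))]
  have : ∀ i : Fin n, variance (Y i) μ = ((N : ℝ) - (i : ℕ)) ^ 2 - ((N : ℝ) - (i : ℕ)) :=
    fun i => (hmom i).2
  simp_rw [show ∀ i : Fin n, variance (fun ω => (X i ω : ℝ)) μ = _ from this]
  rw [Fin.sum_univ_eq_sum_range (fun i => ((N : ℝ) - i) ^ 2 - ((N : ℝ) - i)) n]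
  exact sum_range_poly N n
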